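/- Suppose the Zygmund-type inequality holds: u*(t) ≤ (1/√(4π))√(4π/T + log(T/t))·√(‖∇u‖₂² + ‖u‖₂²) for all u ∈ H¹(ℝ²), T > 0, t ∈ (0,T]. Then there exists C > 0 such that for every β < 4π and every u ∈ H¹(ℝ²) with ‖∇u‖₂ ≤ 1, ∫_{ℝ²}(e^{βu²} − 1) dx ≤ (C/(1 − β/(4π))²)·‖u‖₂². -/

import Mathlib

open MeasureTheory Real

/-- The decreasing rearrangement of a function on `ℝ²`. -/
noncomputable def decRearr (u : EuclideanSpace ℝ (Fin 2) → ℝ) (t : ℝ) : ℝ :=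
  sInf {s : ℝ | 0 ≤ s ∧ volume {x : EuclideanSpace ℝ (Fin 2) | s < |u x|} ≤ ENNReal.ofReal t}

/-- Membership in `H¹(ℝ²)`. -/
def MemH1 (u : EuclideanSpace ℝ (Fin 2) → ℝ) : Prop :=
  Differentiable ℝ u ∧ MemLp u 2 (volume : Measure (EuclideanSpace ℝ (Fin 2))) ∧
    MemLp (fun x => fderiv ℝ u x) 2 (volume : Measure (EuclideanSpace ℝ (Fin 2)))

private lemma aux_gauss (c : ℝ) (hc : 0 < c) :
    IntegrableOn (fun t : ℝ => 2 * t * Real.exp (-(c * t ^ 2))) (Set.Ioi 2) volume ∧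
      ∫ t in Set.Ioi (2:ℝ), 2 * t * Real.exp (-(c * t ^ 2)) = c⁻¹ * Real.exp (-(c * 4)) := by
  have hderiv : ∀ x ∈ Set.Ici (2:ℝ), HasDerivAt (fun t : ℝ => -c⁻¹ * Real.exp (-(c * t ^ 2)))
      (2 * x * Real.exp (-(c * x ^ 2))) x := by
    intro x _
    have h1 : HasDerivAt (fun t : ℝ => -(c * t ^ 2)) (-(c * (2 * x))) x := by
      simpa using ((hasDerivAt_pow 2 x).const_mul c).fun_neg
    have h2 := (h1.exp).const_mul (-c⁻¹)
    refine h2.congr_deriv ?_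
    field_simp
  have hpos : ∀ x ∈ Set.Ioi (2:ℝ), 0 ≤ 2 * x * Real.exp (-(c * x ^ 2)) := by
    intro x hx
    have hx0 : (0:ℝ) < x := lt_trans (by norm_num) hx
    positivity
  have htend : Filter.Tendsto (fun t : ℝ => -c⁻¹ * Real.exp (-(c * t ^ 2)))
      Filter.atTop (nhds 0) := by
    have h1 : Filter.Tendsto (fun t : ℝ => -(c * t ^ 2)) Filter.atTop Filter.atBot := by
      rw [Filter.tendsto_neg_atBot_iff]
      exact (Filter.tendsto_pow_atTop two_ne_zero).const_mul_atTop hc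
    have := (Real.tendsto_exp_atBot.comp h1).const_mul (-c⁻¹)
    simpa using this
  refine ⟨integrableOn_Ioi_deriv_of_nonneg' hderiv hpos htend, ?_⟩
  rw [integral_Ioi_of_hasDerivAt_of_nonneg' hderiv hpos htend]
  norm_num

private lemma aux_layercake {v : EuclideanSpace ℝ (Fin 2) → ℝ} (hv : Continuous v)
    {g : ℝ → ℝ} {G : ℝ → ℝ} (hg : Continuous g) (hgnn : ∀ t, 0 < t → 0 ≤ g t)
    (hG : ∀ a : ℝ, ∫ t in (0:ℝ)..a, g t = G a) :
    ∫⁻ x, ENNReal.ofReal (G |v x|) =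
      ∫⁻ t in Set.Ioi (0:ℝ),
        volume {x : EuclideanSpace ℝ (Fin 2) | t < |v x|} * ENNReal.ofReal (g t) := by
  rw [← lintegral_comp_eq_lintegral_meas_lt_mul volume
      (Filter.Eventually.of_forall (fun x => abs_nonneg (v x)))
      (hv.abs.measurable.aemeasurable)
      (fun t _ => (hg.intervalIntegrable _ _))
      (by filter_upwards [ae_restrict_mem measurableSet_Ioi] with t ht using hgnn t ht)]
  exact lintegral_congr fun x => by rw [hG]

private lemma aux_nonempty {v : EuclideanSpace ℝ (Fin 2) → ℝ}
    (hv : Continuous v) (hvi : Integrable (fun x => (v x)^2) volume) {t : ℝ} (ht : 0 < t) :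
    ∃ r : ℝ, 0 ≤ r ∧ volume {x : EuclideanSpace ℝ (Fin 2) | r < |v x|} ≤ ENNReal.ofReal t := by
  set M := ∫ x, (v x)^2 with hM
  have hM0 : 0 ≤ M := integral_nonneg fun x => sq_nonneg _
  set r := Real.sqrt (M / t) + 1 with hr
  have hr0 : 0 < r := by positivity
  refine ⟨r, hr0.le, ?_⟩
  have hsub : {x : EuclideanSpace ℝ (Fin 2) | r < |v x|} ⊆
      {x : EuclideanSpace ℝ (Fin 2) |
        ENNReal.ofReal (r^2) ≤ ENNReal.ofReal ((v x)^2)} := by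
    intro x hx
    have hx' : r < |v x| := hx
    have h1 : r^2 ≤ (v x)^2 := by nlinarith [sq_abs (v x), abs_nonneg (v x)]
    exact ENNReal.ofReal_le_ofReal h1
  calc volume {x : EuclideanSpace ℝ (Fin 2) | r < |v x|}
      ≤ volume {x : EuclideanSpace ℝ (Fin 2) |
          ENNReal.ofReal (r^2) ≤ ENNReal.ofReal ((v x)^2)} := measure_mono hsub
    _ ≤ (∫⁻ x, ENNReal.ofReal ((v x)^2)) / ENNReal.ofReal (r^2) :=
        meas_ge_le_lintegral_div
          (((hv.pow 2).measurable).ennreal_ofReal.aemeasurable)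
          (ENNReal.ofReal_pos.2 (by positivity)).ne' ENNReal.ofReal_ne_top
    _ = ENNReal.ofReal M / ENNReal.ofReal (r^2) := by
        rw [← ofReal_integral_eq_lintegral_ofReal hvi
          (Filter.Eventually.of_forall fun x => sq_nonneg _)]
    _ = ENNReal.ofReal (M / r^2) := by
        rw [ENNReal.ofReal_div_of_pos (by positivity)]
    _ ≤ ENNReal.ofReal t := by
        apply ENNReal.ofReal_le_ofReal
        rw [div_le_iff₀ (by positivity)]
        have h2 : M / t ≤ r^2 := by
          nlinarith [Real.sq_sqrt (div_nonneg hM0 ht.le), Real.sqrt_nonneg (M/t)]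
        have h3 : M = t * (M/t) := by field_simp
        calc M = t * (M/t) := h3
          _ ≤ t * r^2 := mul_le_mul_of_nonneg_left h2 ht.le
  done

private lemma aux_dist {v : EuclideanSpace ℝ (Fin 2) → ℝ} {t w : ℝ}
    (hne : ∃ r : ℝ, 0 ≤ r ∧ volume {x : EuclideanSpace ℝ (Fin 2) | r < |v x|} ≤ ENNReal.ofReal t)
    (h : decRearr v t < w) :
    volume {x : EuclideanSpace ℝ (Fin 2) | w < |v x|} ≤ ENNReal.ofReal t := by
  have hne' : Set.Nonempty {s : ℝ | 0 ≤ s ∧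
      volume {x : EuclideanSpace ℝ (Fin 2) | s < |v x|} ≤ ENNReal.ofReal t} := by
    obtain ⟨r, h1, h2⟩ := hne
    exact ⟨r, h1, h2⟩
  obtain ⟨r, hrS, hrw⟩ := exists_lt_of_csInf_lt hne' h
  refine le_trans (measure_mono ?_) hrS.2
  intro x hx
  exact lt_trans hrw hx

private lemma aux_scale (f : EuclideanSpace ℝ (Fin 2) → ℝ) {lam : ℝ} (hlam : 0 < lam) :
    ∫ x, f (lam • x) = (lam^2)⁻¹ * ∫ x, f x := by
  rw [MeasureTheory.Measure.integral_comp_smul volume f lam]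
  rw [show (Module.finrank ℝ (EuclideanSpace ℝ (Fin 2))) = 2 from finrank_euclideanSpace_fin]
  rw [abs_of_nonneg (by positivity), smul_eq_mul]

set_option maxHeartbeats 2000000 in
/-- The Zygmund-type inequality implies the Adachi–Tanaka inequality with
quadratically growing constant `C/(1 − β/4π)²`. -/
theorem zygmund_implies_adachi_tanaka_quadratic
    (hZ : ∀ u : EuclideanSpace ℝ (Fin 2) → ℝ, MemH1 u →
      ∀ T : ℝ, 0 < T → ∀ t : ℝ, 0 < t → t ≤ T →
        decRearr u t ≤
          (1 / Real.sqrt (4 * π)) * Real.sqrt (4 * π / T + Real.log (T / t)) *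
            Real.sqrt ((∫ x, ‖fderiv ℝ u x‖ ^ 2 ∂volume) + ∫ x, (u x) ^ 2 ∂volume)) :
    ∃ C : ℝ, 0 < C ∧
      ∀ β : ℝ, β < 4 * π →
        ∀ u : EuclideanSpace ℝ (Fin 2) → ℝ, MemH1 u →
          (∫ x, ‖fderiv ℝ u x‖ ^ 2 ∂volume) ≤ 1 →
          ∫ x, (Real.exp (β * (u x) ^ 2) - 1) ∂volume ≤
            (C / (1 - β / (4 * π)) ^ 2) * ∫ x, (u x) ^ 2 ∂volume := by
  have hπ : (0:ℝ) < π := Real.pi_pos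
  set A := 4 * π * Real.exp (16 * π) + 2 * Real.exp (20 * π) with hA
  have hA0 : 0 < A := by rw [hA]; positivity
  refine ⟨16 * A, by linarith, ?_⟩
  intro β hβ u hu hD
  have hL0 : (0:ℝ) ≤ ∫ x, (u x)^2 := integral_nonneg fun x => sq_nonneg _
  rcases le_or_gt β 0 with hβ0 | hβ0
  · -- trivial case β ≤ 0
    have h1 : ∫ x, (Real.exp (β * (u x)^2) - 1) ≤ 0 := by
      apply integral_nonpos
      intro x
      have h2 : β * (u x)^2 ≤ 0 := mul_nonpos_of_nonpos_of_nonneg hβ0 (sq_nonneg _)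
      have h3 : Real.exp (β * (u x)^2) ≤ 1 := Real.exp_le_one_iff.2 h2
      simpa using sub_nonpos.2 h3
    have h2 : 0 ≤ (16 * A / (1 - β / (4*π))^2) * ∫ x, (u x)^2 :=
      mul_nonneg (div_nonneg (by linarith) (sq_nonneg _)) hL0
    linarith
  -- main case 0 < β < 4π
  set k2 := (1 - β/(4*π))/4 with hk2def
  have hk2 : 0 < k2 := by
    have h1 : β/(4*π) < 1 := (div_lt_one (by positivity)).2 hβ
    rw [hk2def]; linarith
  have hk2q : k2 ≤ 1/4 := by
    have h1 : 0 < β/(4*π) := by positivity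
    rw [hk2def]; linarith
  have hβ4π : β ≤ 4*π := hβ.le
  rcases eq_or_lt_of_le hL0 with hLz | hL
  · -- L = 0 : u ≡ 0
    have hu2 : Integrable (fun x => (u x)^2) volume := hu.2.1.integrable_sq
    have hae : (fun x => (u x)^2) =ᵐ[volume] 0 :=
      (integral_eq_zero_iff_of_nonneg_ae
        (Filter.Eventually.of_forall fun x => sq_nonneg _) hu2).1 hLz.symm
    have heq : (fun x : EuclideanSpace ℝ (Fin 2) => (u x)^2) = 0 :=
      (Continuous.ae_eq_iff_eq volume ((hu.1.continuous).pow 2) continuous_const).1 hae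
    have hux : ∀ x, u x = 0 := by
      intro x
      have := congrFun heq x
      simpa [pow_eq_zero_iff] using this
    have h1 : ∫ x, (Real.exp (β * (u x)^2) - 1) = 0 := by
      have : (fun x : EuclideanSpace ℝ (Fin 2) => Real.exp (β * (u x)^2) - 1) = fun _ => 0 := by
        funext x; rw [hux x]; simp
      rw [this, integral_zero]
    rw [h1, ← hLz, mul_zero]
  -- L > 0
  set L := ∫ x, (u x)^2 with hLdef
  set lam := Real.sqrt (L / k2) with hlamdef
  have hlam : 0 < lam := Real.sqrt_pos.2 (by positivity)
  have hlam2 : lam^2 = L / k2 := Real.sq_sqrt (by positivity)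
  set v := fun x : EuclideanSpace ℝ (Fin 2) => u (lam • x) with hvdef
  have hvc : Continuous v := hu.1.continuous.comp (continuous_const_smul lam)
  have hscale : ∀ f : EuclideanSpace ℝ (Fin 2) → ℝ,
      ∫ x, f (lam • x) = (lam^2)⁻¹ * ∫ x, f x := fun f => aux_scale f hlam
  have hv2 : ∫ x, (v x)^2 = k2 := by
    rw [hvdef]
    have h1 := hscale (fun y => (u y)^2)
    rw [h1, hlam2, ← hLdef]
    field_simp
  have hv2i : Integrable (fun x => (v x)^2) volume := by
    rw [hvdef]
    exact (integrable_comp_smul_iff volume (fun y => (u y)^2) hlam.ne').2 hu.2.1.integrable_sq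
  have hvd : Differentiable ℝ v := hu.1.comp (differentiable_id.const_smul lam)
  have hfd : ∀ x, fderiv ℝ v x = lam • fderiv ℝ u (lam • x) := by
    intro x
    have h1 : HasFDerivAt (fun y : EuclideanSpace ℝ (Fin 2) => lam • y)
        (lam • ContinuousLinearMap.id ℝ (EuclideanSpace ℝ (Fin 2))) x :=
      (hasFDerivAt_id x).const_smul lam
    have h2 : HasFDerivAt v ((fderiv ℝ u (lam • x)).comp
        (lam • ContinuousLinearMap.id ℝ (EuclideanSpace ℝ (Fin 2)))) x :=
      ((hu.1 (lam • x)).hasFDerivAt).comp x h1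
    rw [h2.fderiv, ContinuousLinearMap.comp_smul, ContinuousLinearMap.comp_id]
  have hnorm : ∀ x, ‖fderiv ℝ v x‖^2 = lam^2 * ‖fderiv ℝ u (lam • x)‖^2 := by
    intro x
    rw [hfd x, norm_smul, Real.norm_eq_abs, abs_of_pos hlam]
    ring
  have hvD : ∫ x, ‖fderiv ℝ v x‖^2 = ∫ x, ‖fderiv ℝ u x‖^2 := by
    calc ∫ x, ‖fderiv ℝ v x‖^2 = ∫ x, lam^2 * ‖fderiv ℝ u (lam • x)‖^2 := by
          simp_rw [hnorm]
      _ = lam^2 * ∫ x, ‖fderiv ℝ u (lam • x)‖^2 := integral_const_mul _ _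
      _ = lam^2 * ((lam^2)⁻¹ * ∫ x, ‖fderiv ℝ u x‖^2) := by
          rw [hscale (fun y => ‖fderiv ℝ u y‖^2)]
      _ = ∫ x, ‖fderiv ℝ u x‖^2 := by
          field_simp
  have hvm2 : MemLp v 2 volume :=
    (memLp_two_iff_integrable_sq hvc.aestronglyMeasurable).2 hv2i
  have hfdm : MemLp (fun x => fderiv ℝ v x) 2 volume := by
    have hmeas : AEStronglyMeasurable (fun x : EuclideanSpace ℝ (Fin 2) =>
        fderiv ℝ u (lam • x)) volume :=
      ((measurable_fderiv ℝ u).stronglyMeasurable.comp_measurable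
        (measurable_id.const_smul lam)).aestronglyMeasurable
    have h0 : Integrable (fun y => ‖fderiv ℝ u y‖^2) volume :=
      (memLp_two_iff_integrable_sq_norm hu.2.2.aestronglyMeasurable).1 hu.2.2
    have hint : Integrable (fun x : EuclideanSpace ℝ (Fin 2) =>
        ‖fderiv ℝ u (lam • x)‖^2) volume :=
      (integrable_comp_smul_iff volume (fun y => ‖fderiv ℝ u y‖^2) hlam.ne').2 h0
    have h1 : MemLp (fun x : EuclideanSpace ℝ (Fin 2) => fderiv ℝ u (lam • x)) 2 volume :=
      (memLp_two_iff_integrable_sq_norm hmeas).2 hint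
    have h2 := h1.const_smul lam
    have h3 : (fun x => fderiv ℝ v x) =
        lam • (fun x : EuclideanSpace ℝ (Fin 2) => fderiv ℝ u (lam • x)) := by
      funext x
      rw [hfd x]
      rfl
    rw [h3]
    exact h2
  have hvmem : MemH1 v := ⟨hvd, hvm2, hfdm⟩
  set Ev := (∫ x, ‖fderiv ℝ v x‖^2) + ∫ x, (v x)^2 with hEdef
  have hEub : Ev ≤ 1 + k2 := by rw [hEdef, hvD, hv2]; linarith
  have hElb : k2 ≤ Ev := by
    rw [hEdef, hv2]
    have h1 : (0:ℝ) ≤ ∫ x, ‖fderiv ℝ v x‖^2 := integral_nonneg fun x => sq_nonneg _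
    linarith
  have hE0 : 0 < Ev := lt_of_lt_of_le hk2 hElb
  have key : ∀ w : ℝ, 2 ≤ w →
      volume {x : EuclideanSpace ℝ (Fin 2) | w < |v x|} ≤
        ENNReal.ofReal (Real.exp (4*π + 4*π/Ev - 4*π*w^2/Ev)) := by
    intro w hw
    set t := Real.exp (4*π + 4*π/Ev - 4*π*w^2/Ev) with htdef
    have ht : 0 < t := Real.exp_pos _
    have ht1 : t ≤ 1 := by
      rw [htdef]
      apply Real.exp_le_one_iff.2
      have hw4 : (4:ℝ) ≤ w^2 := by nlinarith
      have hnum : 4*π*Ev + 4*π - 4*π*w^2 ≤ 0 := by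
        nlinarith [mul_le_mul_of_nonneg_left hEub (by positivity : (0:ℝ) ≤ 4*π),
          mul_le_mul_of_nonneg_left hw4 (by positivity : (0:ℝ) ≤ 4*π)]
      have heq : 4*π + 4*π/Ev - 4*π*w^2/Ev = (4*π*Ev + 4*π - 4*π*w^2)/Ev := by
        field_simp
      rw [heq]
      exact div_nonpos_of_nonpos_of_nonneg hnum hE0.le
    have hzy := hZ v hvmem 1 one_pos t ht ht1
    rw [← hEdef] at hzy
    have hw2 : (0:ℝ) ≤ w^2 - 1 := by nlinarith
    have hlog : Real.log (1/t) = -(4*π + 4*π/Ev - 4*π*w^2/Ev) := by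
      rw [one_div, Real.log_inv, htdef, Real.log_exp]
    have hbr : 4*π/1 + Real.log (1/t) = 4*π*(w^2-1)/Ev := by
      rw [hlog]; field_simp; ring
    have hsqrt : (1 / Real.sqrt (4*π)) * Real.sqrt (4*π/1 + Real.log (1/t)) *
        Real.sqrt Ev = Real.sqrt (w^2 - 1) := by
      have e0 : (0:ℝ) ≤ 4*π*(w^2-1)/Ev := div_nonneg (mul_nonneg (by positivity) hw2) hE0.le
      have h1 : Real.sqrt (4*π*(w^2-1)/Ev) * Real.sqrt Ev =
          Real.sqrt (4*π) * Real.sqrt (w^2-1) := by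
        rw [← Real.sqrt_mul e0 Ev]
        rw [show 4*π*(w^2-1)/Ev * Ev = (4*π) * (w^2-1) from by field_simp]
        exact Real.sqrt_mul (by positivity) _
      rw [hbr, mul_assoc, h1, one_div, ← mul_assoc,
        inv_mul_cancel₀ (by positivity : Real.sqrt (4*π) ≠ 0), one_mul]
    have hlt : decRearr v t < w := by
      have h7 : Real.sqrt (w^2 - 1) < w := by
        have h8 : Real.sqrt (w^2 - 1) < Real.sqrt (w^2) :=
          Real.sqrt_lt_sqrt hw2 (by linarith)
        rwa [Real.sqrt_sq (by linarith)] at h8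
      calc decRearr v t ≤ _ := hzy
        _ = Real.sqrt (w^2-1) := hsqrt
        _ < w := h7
    exact aux_dist (aux_nonempty hvc hv2i ht) hlt
  -- layer cake
  have hG1 : ∀ a : ℝ, ∫ s in (0:ℝ)..a, 2*β*s*Real.exp (β*s^2) = Real.exp (β*a^2) - 1 := by
    intro a
    have hder : ∀ s ∈ Set.uIcc (0:ℝ) a,
        HasDerivAt (fun s : ℝ => Real.exp (β*s^2)) (2*β*s*Real.exp (β*s^2)) s := by
      intro s _
      have h1 : HasDerivAt (fun s : ℝ => β*s^2) (β*(2*s)) s := by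
        simpa using (hasDerivAt_pow 2 s).const_mul β
      have h2 := h1.exp
      convert h2 using 1
      ring
    have hint : IntervalIntegrable (fun s => 2*β*s*Real.exp (β*s^2)) volume 0 a :=
      (Continuous.intervalIntegrable (by continuity) _ _)
    rw [intervalIntegral.integral_eq_sub_of_hasDerivAt hder hint]
    norm_num
  have hG2 : ∀ a : ℝ, ∫ s in (0:ℝ)..a, 2*s = a^2 := by
    intro a
    have : (fun s : ℝ => 2*s) = fun s : ℝ => 2*s := rfl
    rw [intervalIntegral.integral_const_mul, integral_id]
    ring
  have lc1 : ∫⁻ x, ENNReal.ofReal (Real.exp (β*(v x)^2) - 1) =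
      ∫⁻ t in Set.Ioi (0:ℝ), volume {x : EuclideanSpace ℝ (Fin 2) | t < |v x|} *
        ENNReal.ofReal (2*β*t*Real.exp (β*t^2)) := by
    have h1 := aux_layercake hvc (g := fun t => 2*β*t*Real.exp (β*t^2))
      (G := fun a => Real.exp (β*a^2) - 1) (by continuity)
      (fun t ht => by positivity) hG1
    rw [← h1]
    exact lintegral_congr fun x => by simp [sq_abs]
  have lc2 : ∫⁻ t in Set.Ioi (0:ℝ), volume {x : EuclideanSpace ℝ (Fin 2) | t < |v x|} *
      ENNReal.ofReal (2*t) = ENNReal.ofReal k2 := by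
    have h1 := aux_layercake hvc (g := fun t => 2*t) (G := fun a => a^2)
      (by continuity) (fun t ht => by positivity) hG2
    rw [← h1]
    calc ∫⁻ x, ENNReal.ofReal (|v x|^2)
        = ∫⁻ x, ENNReal.ofReal ((v x)^2) := lintegral_congr fun x => by rw [sq_abs]
      _ = ENNReal.ofReal (∫ x, (v x)^2) :=
          (ofReal_integral_eq_lintegral_ofReal hv2i
            (Filter.Eventually.of_forall fun x => sq_nonneg _)).symm
      _ = ENNReal.ofReal k2 := by rw [hv2]
  set F := fun t : ℝ => volume {x : EuclideanSpace ℝ (Fin 2) | t < |v x|} *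
      ENNReal.ofReal (2*β*t*Real.exp (β*t^2)) with hFdef
  have hsplit : ∫⁻ t in Set.Ioi (0:ℝ), F t =
      (∫⁻ t in Set.Ioc (0:ℝ) 2, F t) + ∫⁻ t in Set.Ioi (2:ℝ), F t := by
    rw [← Set.Ioc_union_Ioi_eq_Ioi (by norm_num : (0:ℝ) ≤ 2)]
    exact lintegral_union measurableSet_Ioi (Set.Ioc_disjoint_Ioi le_rfl)
  have hFm : Measurable (fun t : ℝ =>
      volume {x : EuclideanSpace ℝ (Fin 2) | t < |v x|}) := by
    apply Antitone.measurable
    intro a b hab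
    exact measure_mono fun x hx => lt_of_le_of_lt hab hx
  have part1 : ∫⁻ t in Set.Ioc (0:ℝ) 2, F t ≤ ENNReal.ofReal (4*π*Real.exp (16*π) * k2) := by
    have step1 : ∫⁻ t in Set.Ioc (0:ℝ) 2, F t ≤
        ∫⁻ t in Set.Ioc (0:ℝ) 2, ENNReal.ofReal (β*Real.exp (4*β)) *
          (volume {x : EuclideanSpace ℝ (Fin 2) | t < |v x|} * ENNReal.ofReal (2*t)) := by
      apply setLIntegral_mono
      · exact measurable_const.mul (hFm.mul (by fun_prop))
      · intro t ht
        have ht1 : 0 < t := ht.1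
        have ht2 : t ≤ 2 := ht.2
        have hexp : Real.exp (β*t^2) ≤ Real.exp (4*β) := by
          apply Real.exp_le_exp.2
          nlinarith [mul_nonneg hβ0.le (by nlinarith : (0:ℝ) ≤ 4 - t^2)]
        have h1 : 2*β*t*Real.exp (β*t^2) ≤ β*Real.exp (4*β) * (2*t) := by
          have h9 := mul_le_mul_of_nonneg_left hexp (by positivity : (0:ℝ) ≤ 2*β*t)
          nlinarith [h9]
        calc F t ≤ volume {x : EuclideanSpace ℝ (Fin 2) | t < |v x|} *
              ENNReal.ofReal (β*Real.exp (4*β) * (2*t)) :=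
            mul_le_mul_right (ENNReal.ofReal_le_ofReal h1) _
          _ = ENNReal.ofReal (β*Real.exp (4*β)) *
              (volume {x : EuclideanSpace ℝ (Fin 2) | t < |v x|} * ENNReal.ofReal (2*t)) := by
            rw [ENNReal.ofReal_mul (by positivity)]
            ring
    calc ∫⁻ t in Set.Ioc (0:ℝ) 2, F t ≤ _ := step1
      _ = ENNReal.ofReal (β*Real.exp (4*β)) * ∫⁻ t in Set.Ioc (0:ℝ) 2,
          volume {x : EuclideanSpace ℝ (Fin 2) | t < |v x|} * ENNReal.ofReal (2*t) :=
          lintegral_const_mul' _ _ ENNReal.ofReal_ne_top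
      _ ≤ ENNReal.ofReal (β*Real.exp (4*β)) * ∫⁻ t in Set.Ioi (0:ℝ),
          volume {x : EuclideanSpace ℝ (Fin 2) | t < |v x|} * ENNReal.ofReal (2*t) :=
          mul_le_mul_right (lintegral_mono_set Set.Ioc_subset_Ioi_self) _
      _ = ENNReal.ofReal (β*Real.exp (4*β)) * ENNReal.ofReal k2 := by rw [lc2]
      _ = ENNReal.ofReal (β*Real.exp (4*β) * k2) :=
          (ENNReal.ofReal_mul (by positivity)).symm
      _ ≤ ENNReal.ofReal (4*π*Real.exp (16*π) * k2) := by
          apply ENNReal.ofReal_le_ofReal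
          have h2 : Real.exp (4*β) ≤ Real.exp (16*π) := Real.exp_le_exp.2 (by linarith)
          have h3 : β*Real.exp (4*β) ≤ 4*π*Real.exp (16*π) :=
            mul_le_mul hβ4π h2 (Real.exp_pos _).le (by positivity)
          exact mul_le_mul_of_nonneg_right h3 hk2.le
  set c := 4*π/Ev - β with hcdef
  have hc2 : 2*π*k2 ≤ c := by
    have h2 : (0:ℝ) < 1 + k2 := by linarith
    have h1 : 4*π/(1+k2) ≤ 4*π/Ev := by
      apply div_le_div_of_nonneg_left (by positivity) hE0 hEub
    have hβeq : β = 4*π - 16*π*k2 := by rw [hk2def]; field_simp; ring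
    have h3 : 2*π*k2 + β ≤ 4*π/(1+k2) := by
      rw [le_div_iff₀ h2]
      nlinarith
    rw [hcdef]; linarith
  have hc0 : 0 < c := lt_of_lt_of_le (by positivity) hc2
  have part2 : ∫⁻ t in Set.Ioi (2:ℝ), F t ≤ ENNReal.ofReal (2*Real.exp (20*π)/k2) := by
    set Cf := β * Real.exp (4*π + 4*π/Ev) with hCf
    have hCf0 : 0 < Cf := by rw [hCf]; positivity
    have step1 : ∫⁻ t in Set.Ioi (2:ℝ), F t ≤
        ∫⁻ t in Set.Ioi (2:ℝ), ENNReal.ofReal (Cf * (2*t*Real.exp (-(c*t^2)))) := by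
      apply setLIntegral_mono
      · fun_prop
      · intro t ht
        have ht2 : (2:ℝ) ≤ t := le_of_lt ht
        have hvol := key t ht2
        calc F t ≤ ENNReal.ofReal (Real.exp (4*π + 4*π/Ev - 4*π*t^2/Ev)) *
              ENNReal.ofReal (2*β*t*Real.exp (β*t^2)) := mul_le_mul_left hvol _
          _ = ENNReal.ofReal (Real.exp (4*π+4*π/Ev-4*π*t^2/Ev) * (2*β*t*Real.exp (β*t^2))) :=
              (ENNReal.ofReal_mul (Real.exp_nonneg _)).symm
          _ = ENNReal.ofReal (Cf * (2*t*Real.exp (-(c*t^2)))) := by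
              congr 1
              have e1 : Real.exp (4*π+4*π/Ev-4*π*t^2/Ev) =
                  Real.exp (4*π+4*π/Ev) * Real.exp (-(4*π*t^2/Ev)) := by
                rw [← Real.exp_add]; ring_nf
              have e2 : Real.exp (-(c*t^2)) =
                  Real.exp (β*t^2) * Real.exp (-(4*π*t^2/Ev)) := by
                rw [← Real.exp_add]; congr 1; rw [hcdef]; ring
              rw [e1, e2, hCf]; ring
    have step2 : ∫⁻ t in Set.Ioi (2:ℝ), ENNReal.ofReal (Cf * (2*t*Real.exp (-(c*t^2)))) =
        ENNReal.ofReal (Cf * (c⁻¹ * Real.exp (-(c*4)))) := by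
      obtain ⟨hint, hval⟩ := aux_gauss c hc0
      rw [← ofReal_integral_eq_lintegral_ofReal (hint.const_mul Cf)
        (by filter_upwards [ae_restrict_mem measurableSet_Ioi] with t ht
            have ht0 : (0:ℝ) < t := lt_trans (by norm_num) ht
            positivity)]
      congr 1
      rw [integral_const_mul, hval]
    have step3 : Cf * (c⁻¹ * Real.exp (-(c*4))) ≤ 2*Real.exp (20*π)/k2 := by
      have h1 : Real.exp (4*π+4*π/Ev) * Real.exp (-(c*4)) =
          Real.exp (4*π+4*π/Ev - 4*c) := by rw [← Real.exp_add]; ring_nf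
      have h2 : 4*π+4*π/Ev - 4*c ≤ 20*π := by
        rw [hcdef]
        have h4 : 0 ≤ 12*π/Ev := by positivity
        have h5 : 4*π/Ev - 4*(4*π/Ev - β) = -(12*π/Ev) + 4*β := by ring
        nlinarith
      have h3 : Real.exp (4*π+4*π/Ev-4*c) ≤ Real.exp (20*π) := Real.exp_le_exp.2 h2
      have h5 : c⁻¹ ≤ (2*π*k2)⁻¹ := by
        apply inv_anti₀ (by positivity) hc2
      calc Cf * (c⁻¹*Real.exp (-(c*4)))
          = β * c⁻¹ * (Real.exp (4*π+4*π/Ev) * Real.exp (-(c*4))) := by rw [hCf]; ring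
        _ = β * c⁻¹ * Real.exp (4*π+4*π/Ev-4*c) := by rw [h1]
        _ ≤ 4*π * (2*π*k2)⁻¹ * Real.exp (20*π) := by
            apply mul_le_mul (mul_le_mul hβ4π h5 (by positivity) (by positivity)) h3
              (by positivity) (by positivity)
        _ = 2*Real.exp (20*π)/k2 := by field_simp; ring
    calc ∫⁻ t in Set.Ioi (2:ℝ), F t ≤ _ := step1
      _ = _ := step2
      _ ≤ ENNReal.ofReal (2*Real.exp (20*π)/k2) := ENNReal.ofReal_le_ofReal step3
  have hlint : ∫⁻ x, ENNReal.ofReal (Real.exp (β*(v x)^2) - 1) ≤ ENNReal.ofReal (A/k2) := by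
    rw [lc1, hsplit]
    have hsum : (4*π*Real.exp (16*π) * k2) + (2*Real.exp (20*π)/k2) ≤ A/k2 := by
      rw [hA, add_div]
      have h2 : k2 ≤ 1/k2 := by
        rw [le_div_iff₀ hk2]; nlinarith
      have h3 : 4*π*Real.exp (16*π)*k2 ≤ 4*π*Real.exp (16*π)/k2 := by
        calc 4*π*Real.exp (16*π)*k2 ≤ 4*π*Real.exp (16*π)*(1/k2) :=
              mul_le_mul_of_nonneg_left h2 (by positivity)
          _ = 4*π*Real.exp (16*π)/k2 := by ring
      linarith
    calc (∫⁻ t in Set.Ioc (0:ℝ) 2, F t) + ∫⁻ t in Set.Ioi (2:ℝ), F t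
        ≤ ENNReal.ofReal (4*π*Real.exp (16*π) * k2) + ENNReal.ofReal (2*Real.exp (20*π)/k2) :=
          add_le_add part1 part2
      _ = ENNReal.ofReal ((4*π*Real.exp (16*π) * k2) + 2*Real.exp (20*π)/k2) :=
          (ENNReal.ofReal_add (by positivity) (by positivity)).symm
      _ ≤ ENNReal.ofReal (A/k2) := ENNReal.ofReal_le_ofReal hsum
  have hvnn : ∀ x, 0 ≤ Real.exp (β*(v x)^2) - 1 := by
    intro x
    have h1 : (0:ℝ) ≤ β*(v x)^2 := by positivity
    nlinarith [Real.add_one_le_exp (β*(v x)^2)]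
  have hILv : ∫ x, (Real.exp (β*(v x)^2) - 1) ≤ A/k2 := by
    by_cases hi : Integrable (fun x => Real.exp (β*(v x)^2) - 1) volume
    · rw [MeasureTheory.integral_eq_lintegral_of_nonneg_ae
        (Filter.Eventually.of_forall hvnn) hi.aestronglyMeasurable]
      exact ENNReal.toReal_le_of_le_ofReal (by positivity) hlint
    · rw [integral_undef hi]
      positivity
  have hIu : ∫ x, (Real.exp (β*(u x)^2) - 1) = lam^2 * ∫ x, (Real.exp (β*(v x)^2) - 1) := by
    have h1 := hscale (fun y => Real.exp (β*(u y)^2) - 1)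
    have h2 : ∫ x, (Real.exp (β*(v x)^2) - 1) =
        (lam^2)⁻¹ * ∫ x, (Real.exp (β*(u x)^2) - 1) := h1
    rw [h2]
    field_simp
  calc ∫ x, (Real.exp (β*(u x)^2) - 1)
      = lam^2 * ∫ x, (Real.exp (β*(v x)^2) - 1) := hIu
    _ ≤ lam^2 * (A/k2) := mul_le_mul_of_nonneg_left hILv (by positivity)
    _ = (L/k2) * (A/k2) := by rw [hlam2]
    _ = (16*A / (1 - β/(4*π))^2) * L := by
        have h41 : 1 - β/(4*π) = 4*k2 := by rw [hk2def]; ring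
        rw [h41]
        field_simp
        ring
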